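/- Let H be a bialgebra over a field of characteristic zero and φ : H → K[L] an algebra morphism into the polynomial algebra whose constant term (evaluation at L = 0) equals the counit ε. Let σ : H → K be the linear-in-L coefficient of φ. Then σ is an infinitesimal character (σ(ab) = ε(a)σ(b) + σ(a)ε(b)), and φ is a bialgebra morphism if and only if φ = exp_*(Lσ) = ε + Lσ + (L²/2) σ*σ + ⋯, where * is the convolution product (α*β = m∘(α⊗β)∘Δ) and K[L] is a bialgebra with Δ(L) = 1⊗L + L⊗1. -/

import Mathlib

open TensorProduct Polynomial

/-- The convolution product of two linear maps from a coalgebra to an algebra. -/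
noncomputable def convProd {K H A : Type*} [CommRing K] [AddCommGroup H] [Module K H]
    [Coalgebra K H] [CommRing A] [Algebra K A] (f g : H →ₗ[K] A) : H →ₗ[K] A :=
  LinearMap.mul' K A ∘ₗ TensorProduct.map f g ∘ₗ Coalgebra.comul

/-- Convolution powers of an `K`-valued linear map on a coalgebra; the zeroth power is
the counit (the unit of the convolution algebra). -/
noncomputable def convPow {K H : Type*} [CommRing K] [AddCommGroup H] [Module K H]
    [Coalgebra K H] (σ : H →ₗ[K] K) : ℕ → (H →ₗ[K] K)
  | 0 => Coalgebra.counit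
  | n + 1 => convProd σ (convPow σ n)

/-- The standard coproduct on `K[L]`, determined by `Δ L = L ⊗ 1 + 1 ⊗ L`. -/
noncomputable def polyComul (K : Type*) [CommRing K] :
    Polynomial K →ₐ[K] (Polynomial K ⊗[K] Polynomial K) :=
  Polynomial.aeval ((Polynomial.X : Polynomial K) ⊗ₜ[K] 1 + 1 ⊗ₜ[K] Polynomial.X)

set_option linter.unusedSectionVars false

section ConvAux

variable {K H : Type*} [CommRing K] [AddCommGroup H] [Module K H] [Coalgebra K H]

lemma convProd_counit_left (g : H →ₗ[K] K) :
    convProd (Coalgebra.counit) g = g := by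
  ext a
  have h1 : TensorProduct.map (Coalgebra.counit (R := K) (A := H)) g
      = (g.lTensor K) ∘ₗ ((Coalgebra.counit (R := K) (A := H)).rTensor H) :=
    (LinearMap.lTensor_comp_rTensor (f := Coalgebra.counit (R := K) (A := H)) (g := g)).symm
  simp only [convProd, LinearMap.comp_apply, h1]
  rw [Coalgebra.rTensor_counit_comul]
  simp [LinearMap.mul'_apply]

lemma mul'_map_smul_right [Algebra ℚ K] (q : ℚ)
    (f g : H →ₗ[K] K) (x : H ⊗[K] H) :
    LinearMap.mul' K K (TensorProduct.map f (q • g) x)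
      = q • LinearMap.mul' K K (TensorProduct.map f g x) := by
  induction x using TensorProduct.induction_on with
  | zero => simp
  | tmul a b => simp [LinearMap.mul'_apply, mul_smul_comm]
  | add u v hu hv => simp only [map_add, hu, hv, smul_add]

lemma mul'_map_smul_left [Algebra ℚ K] (q : ℚ)
    (f g : H →ₗ[K] K) (x : H ⊗[K] H) :
    LinearMap.mul' K K (TensorProduct.map (q • f) g x)
      = q • LinearMap.mul' K K (TensorProduct.map f g x) := by
  induction x using TensorProduct.induction_on with
  | zero => simp
  | tmul a b => simp [LinearMap.mul'_apply, smul_mul_assoc]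
  | add u v hu hv => simp only [map_add, hu, hv, smul_add]

lemma convProd_assoc (f g h : H →ₗ[K] K) :
    convProd f (convProd g h) = convProd (convProd f g) h := by
  have hmulassoc : (LinearMap.mul' K K) ∘ₗ (LinearMap.mul' K K).lTensor K
        ∘ₗ (TensorProduct.assoc K K K K).toLinearMap
      = (LinearMap.mul' K K) ∘ₗ (LinearMap.mul' K K).rTensor K := by
    apply TensorProduct.ext_threefold
    intro a b c
    simp [LinearMap.mul'_apply, mul_assoc]
  have e1 : TensorProduct.map f (convProd g h)
      = (LinearMap.mul' K K).lTensor K ∘ₗ TensorProduct.map f (TensorProduct.map g h)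
          ∘ₗ (Coalgebra.comul (R := K) (A := H)).lTensor H := by
    apply TensorProduct.ext'
    intro x y
    simp [convProd]
  have e2 : TensorProduct.map (convProd f g) h
      = (LinearMap.mul' K K).rTensor K ∘ₗ TensorProduct.map (TensorProduct.map f g) h
          ∘ₗ (Coalgebra.comul (R := K) (A := H)).rTensor H := by
    apply TensorProduct.ext'
    intro x y
    simp [convProd]
  ext a
  show LinearMap.mul' K K (TensorProduct.map f (convProd g h) (Coalgebra.comul a))
    = LinearMap.mul' K K (TensorProduct.map (convProd f g) h (Coalgebra.comul a))
  rw [e1, e2]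
  simp only [LinearMap.comp_apply]
  rw [← Coalgebra.coassoc_apply, TensorProduct.map_map_assoc]
  have := LinearMap.congr_fun hmulassoc
    (TensorProduct.map (TensorProduct.map f g) h
      ((Coalgebra.comul (R := K) (A := H)).rTensor H (Coalgebra.comul a)))
  simpa using this

lemma convPow_add (σ : H →ₗ[K] K) (m n : ℕ) :
    convProd (convPow σ m) (convPow σ n) = convPow σ (m + n) := by
  induction m with
  | zero => simpa [convPow] using convProd_counit_left (convPow σ n)
  | succ m ih =>
    have hmn : m + 1 + n = (m + n) + 1 := by omega
    rw [hmn]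
    show convProd (convProd σ (convPow σ m)) (convPow σ n) = convProd σ (convPow σ (m + n))
    rw [← convProd_assoc, ih]

end ConvAux

section PolyAux

variable {K : Type*} [CommRing K]

noncomputable def coefT (K : Type*) [CommRing K] (m n : ℕ) :
    (Polynomial K ⊗[K] Polynomial K) →ₗ[K] K :=
  LinearMap.mul' K K ∘ₗ TensorProduct.map (lcoeff K m) (lcoeff K n)

lemma coefT_tmul (m n : ℕ) (p q : Polynomial K) :
    coefT K m n (p ⊗ₜ[K] q) = p.coeff m * q.coeff n := by
  simp [coefT, LinearMap.mul'_apply]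

lemma coefT_injective {x y : Polynomial K ⊗[K] Polynomial K}
    (hxy : ∀ m n, coefT K m n x = coefT K m n y) : x = y := by
  set b := Polynomial.basisMonomials K with hb
  have hrepr : ∀ (p : Polynomial K) (i : ℕ), b.repr p i = p.coeff i := fun _ _ => rfl
  have key : ∀ (z : Polynomial K ⊗[K] Polynomial K) (m n : ℕ),
      (b.tensorProduct b).repr z (m, n) = coefT K m n z := by
    intro z m n
    induction z using TensorProduct.induction_on with
    | zero => simp
    | tmul p q =>
      rw [Module.Basis.tensorProduct_repr_tmul_apply, coefT_tmul, hrepr, hrepr,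
        smul_eq_mul, mul_comm]
    | add u v hu hv => simp [map_add, hu, hv]
  apply (b.tensorProduct b).ext_elem
  rintro ⟨m, n⟩
  rw [key, key]
  exact hxy m n

lemma coefT_polyComul (m n : ℕ) (p : Polynomial K) :
    coefT K m n (polyComul K p) = ((m + n).choose m) • p.coeff (m + n) := by
  induction p using Polynomial.induction_on' with
  | add p q hp hq => simp only [map_add, Polynomial.coeff_add, smul_add, hp, hq]
  | monomial k a =>
    rw [polyComul, Polynomial.aeval_monomial, ← Algebra.smul_def, map_smul]
    have hw : coefT K m n (((X : Polynomial K) ⊗ₜ[K] 1 + 1 ⊗ₜ[K] X) ^ k)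
        = if k = m + n then ((m + n).choose m : K) else 0 := by
      rw [add_pow, map_sum]
      have hterm : ∀ j ∈ Finset.range (k + 1),
          coefT K m n (((X : Polynomial K) ⊗ₜ[K] (1 : Polynomial K)) ^ j *
              ((1 : Polynomial K) ⊗ₜ[K] (X : Polynomial K)) ^ (k - j) *
              (k.choose j : Polynomial K ⊗[K] Polynomial K))
          = if j = m ∧ k = m + n then (k.choose j : K) else 0 := by
        intro j hj
        rw [Finset.mem_range] at hj
        rw [Algebra.TensorProduct.tmul_pow, Algebra.TensorProduct.tmul_pow, one_pow, one_pow,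
          Algebra.TensorProduct.tmul_mul_tmul, one_mul, mul_one, mul_comm, ← nsmul_eq_mul,
          map_nsmul, coefT_tmul, Polynomial.coeff_X_pow, Polynomial.coeff_X_pow]
        by_cases h1 : m = j
        · subst h1
          by_cases h2 : k = m + n
          · subst h2
            have h3 : m + n - m = n := by omega
            simp [h3, nsmul_eq_mul]
          · have h3 : ¬ (n = k - m) := by omega
            simp [h3, h2]
        · have h4 : ¬ (j = m ∧ k = m + n) := fun hh => h1 hh.1.symm
          simp [h1, h4]
      rw [Finset.sum_congr rfl hterm]
      by_cases hk : k = m + n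
      · simp only [hk, and_true]
        rw [Finset.sum_ite_eq' (Finset.range (m + n + 1)) m (fun j => ((m + n).choose j : K))]
        have : m ∈ Finset.range (m + n + 1) := by
          rw [Finset.mem_range]; omega
        simp [this]
      · have : ∀ j ∈ Finset.range (k + 1),
            (if j = m ∧ k = m + n then (k.choose j : K) else 0) = 0 := by
          intro j _; simp [hk]
        rw [Finset.sum_congr rfl this, Finset.sum_const_zero, if_neg hk]
    rw [hw, Polynomial.coeff_monomial]
    by_cases hk : k = m + n
    · simp [hk, smul_eq_mul, nsmul_eq_mul, mul_comm]
    · simp [hk]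

lemma coefT_map {H : Type*} [AddCommGroup H] [Module K H] (m n : ℕ)
    (f g : H →ₗ[K] Polynomial K) (x : H ⊗[K] H) :
    coefT K m n (TensorProduct.map f g x)
      = LinearMap.mul' K K
          (TensorProduct.map (lcoeff K m ∘ₗ f) (lcoeff K n ∘ₗ g) x) := by
  have := LinearMap.congr_fun
    (TensorProduct.map_comp (lcoeff K m) (lcoeff K n) f g) x
  simp only [LinearMap.comp_apply] at this
  simp only [coefT, LinearMap.comp_apply, this]

end PolyAux


/-- Let `φ : H → K[L]` be an algebra morphism from a bialgebra whose constant term is the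
counit, and let `σ` be its linear-in-`L` coefficient.  Then `σ` is an infinitesimal
character, and `φ` is a bialgebra morphism if and only if `φ = exp_*(Lσ)`, i.e.
`coeff n (φ h) = σ^{*n}(h)/n!` for all `h` and `n`. -/
theorem algHom_to_poly_exp_character {K H : Type*} [CommRing K] [Algebra ℚ K]
    [Ring H] [Bialgebra K H] (φ : H →ₐ[K] Polynomial K)
    (hconst : ∀ h : H, (φ h).coeff 0 = Coalgebra.counit (R := K) h) :
    (∀ a b : H, (φ (a * b)).coeff 1 =
        Coalgebra.counit (R := K) a * (φ b).coeff 1 +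
          (φ a).coeff 1 * Coalgebra.counit (R := K) b) ∧
    ((∀ h : H, polyComul K (φ h) =
        TensorProduct.map φ.toLinearMap φ.toLinearMap (Coalgebra.comul (R := K) h)) ↔
      (∀ (h : H) (n : ℕ), (φ h).coeff n =
        (n.factorial : ℚ)⁻¹ •
          convPow ((Polynomial.lcoeff K 1) ∘ₗ φ.toLinearMap) n h)) := by
  set σ : H →ₗ[K] K := (Polynomial.lcoeff K 1) ∘ₗ φ.toLinearMap with hσ
  constructor
  · intro a b
    rw [map_mul, Polynomial.coeff_mul, Finset.Nat.sum_antidiagonal_eq_sum_range_succ_mk]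
    simp [Finset.sum_range_succ, hconst a, hconst b]
  constructor
  · intro hco h n
    induction n generalizing h with
    | zero =>
      simp [convPow, hconst h]
    | succ n ih =>
      have hFn := congrArg (coefT K 1 n) (hco h)
      rw [coefT_polyComul, coefT_map, ← hσ, Nat.choose_one_right] at hFn
      have hg : (lcoeff K n ∘ₗ φ.toLinearMap) = (n.factorial : ℚ)⁻¹ • convPow σ n := by
        ext h'
        simpa using ih h'
      rw [hg, mul'_map_smul_right] at hFn
      have hconv : LinearMap.mul' K K
          (TensorProduct.map σ (convPow σ n) (Coalgebra.comul (R := K) h))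
          = convPow σ (n + 1) h := by
        simp [convPow, convProd]
      rw [hconv] at hFn
      have hne : ((1 + n : ℕ) : ℚ) ≠ 0 := by positivity
      have h2 : (((1 + n : ℕ) : ℚ)) • (φ h).coeff (1 + n)
          = (n.factorial : ℚ)⁻¹ • convPow σ (n + 1) h := by
        rw [Nat.cast_smul_eq_nsmul]
        exact hFn
      have h3 : (φ h).coeff (1 + n)
          = ((1 + n : ℕ) : ℚ)⁻¹ • ((n.factorial : ℚ)⁻¹ • convPow σ (n + 1) h) := by
        rw [← h2, inv_smul_smul₀ hne]
      rw [show n + 1 = 1 + n by omega] at *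
      rw [h3, smul_smul]
      congr 1
      rw [show (1 + n).factorial = (1 + n) * n.factorial by
        rw [show 1 + n = n + 1 by omega, Nat.factorial_succ]]
      push_cast
      rw [mul_inv]
  · intro hexp h
    apply coefT_injective
    intro m n
    rw [coefT_polyComul, coefT_map]
    have hf : (lcoeff K m ∘ₗ φ.toLinearMap) = (m.factorial : ℚ)⁻¹ • convPow σ m := by
      ext h'; simpa using hexp h' m
    have hg : (lcoeff K n ∘ₗ φ.toLinearMap) = (n.factorial : ℚ)⁻¹ • convPow σ n := by
      ext h'; simpa using hexp h' n
    rw [hf, hg, mul'_map_smul_left, mul'_map_smul_right]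
    have hconv : LinearMap.mul' K K
        (TensorProduct.map (convPow σ m) (convPow σ n) (Coalgebra.comul (R := K) h))
        = convPow σ (m + n) h := by
      rw [← convPow_add]
      simp [convProd]
    rw [hconv, hexp h (m + n), ← Nat.cast_smul_eq_nsmul ℚ, smul_smul, smul_smul]
    congr 1
    rw [Nat.cast_choose ℚ (Nat.le_add_right m n), Nat.add_sub_cancel_left]
    have h1 : (m.factorial : ℚ) ≠ 0 := by exact_mod_cast m.factorial_ne_zero
    have h2 : (n.factorial : ℚ) ≠ 0 := by exact_mod_cast n.factorial_ne_zero
    have h3 : ((m + n).factorial : ℚ) ≠ 0 := by exact_mod_cast (m + n).factorial_ne_zero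
    field_simp
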